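/- Let a_1, ..., a_K and b_1, ..., b_L be positive integers such that u_n = (a_1 n)! ··· (a_K n)! / ((b_1 n)! ··· (b_L n)!) is not an integer for some n. Then there exists an integer P such that for every prime p > P, there exists some n with the p-adic valuation of u_n (as a rational number) negative. -/

import Mathlib

set_option maxHeartbeats 1000000

lemma padicValNat_prod' {p : ℕ} (hp : p.Prime) {ι : Type*} (s : Finset ι) (f : ι → ℕ)
    (hf : ∀ i ∈ s, f i ≠ 0) :
    padicValNat p (∏ i ∈ s, f i) = ∑ i ∈ s, padicValNat p (f i) := by
  classical
  rw [← Nat.factorization_def _ hp, Nat.factorization_prod hf]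
  rw [Finset.sum_apply']
  exact Finset.sum_congr rfl fun i hi => Nat.factorization_def _ hp

lemma val_aux {p : ℕ} (hp : p.Prime) {K L B : ℕ} (N : Fin K → ℕ) (M : Fin L → ℕ)
    (hN : ∀ k, Nat.log p (N k) < B) (hM : ∀ l, Nat.log p (M l) < B) :
    padicValRat p ((∏ k, ((N k).factorial : ℚ)) / (∏ l, ((M l).factorial : ℚ))) =
      ∑ i ∈ Finset.Ico 1 B,
        ((∑ k, ((N k / p ^ i : ℕ) : ℤ)) - ∑ l, ((M l / p ^ i : ℕ) : ℤ)) := by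
  haveI := Fact.mk hp
  have h1 : (∏ k, ((N k).factorial : ℚ)) = ((∏ k, (N k).factorial : ℕ) : ℚ) := by push_cast; rfl
  have h2 : (∏ l, ((M l).factorial : ℚ)) = ((∏ l, (M l).factorial : ℕ) : ℚ) := by push_cast; rfl
  have hx : ((∏ k, (N k).factorial : ℕ) : ℚ) ≠ 0 := by
    simp [Nat.factorial_ne_zero, Finset.prod_eq_zero_iff]
  have hy : ((∏ l, (M l).factorial : ℕ) : ℚ) ≠ 0 := by
    simp [Nat.factorial_ne_zero, Finset.prod_eq_zero_iff]
  rw [h1, h2, padicValRat.div hx hy, padicValRat.of_nat, padicValRat.of_nat,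
    padicValNat_prod' hp _ _ (fun k _ => Nat.factorial_ne_zero _),
    padicValNat_prod' hp _ _ (fun l _ => Nat.factorial_ne_zero _)]
  have e1 : ∑ k, padicValNat p (N k).factorial = ∑ k, ∑ i ∈ Finset.Ico 1 B, N k / p ^ i :=
    Finset.sum_congr rfl fun k _ => padicValNat_factorial (hN k)
  have e2 : ∑ l, padicValNat p (M l).factorial = ∑ l, ∑ i ∈ Finset.Ico 1 B, M l / p ^ i :=
    Finset.sum_congr rfl fun l _ => padicValNat_factorial (hM l)
  rw [e1, e2, Finset.sum_comm, Finset.sum_comm (s := Finset.univ)]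
  push_cast
  rw [← Finset.sum_sub_distrib]

lemma neg_val_of_not_int {q : ℚ} (h : ¬ ∃ m : ℤ, q = (m : ℚ)) :
    ∃ p : ℕ, p.Prime ∧ padicValRat p q < 0 := by
  have hden : q.den ≠ 1 := fun hd => h ⟨q.num, (Rat.coe_int_num_of_den_eq_one hd).symm⟩
  set p := q.den.minFac with hp
  have hpp : p.Prime := Nat.minFac_prime hden
  haveI := Fact.mk hpp
  refine ⟨p, hpp, ?_⟩
  have hdvd : p ∣ q.den := Nat.minFac_dvd _
  have hnum : ¬ (p : ℤ) ∣ q.num := by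
    intro hd
    have : p ∣ q.num.natAbs := by rwa [Int.natCast_dvd] at hd
    have := Nat.dvd_gcd this hdvd
    rw [q.reduced.gcd_eq_one] at this
    exact hpp.one_lt.ne' (Nat.dvd_one.mp this)
  rw [padicValRat_def, padicValInt.eq_zero_of_not_dvd hnum]
  have h1 : 1 ≤ padicValNat p q.den := one_le_padicValNat_of_dvd q.pos.ne' hdvd
  omega

lemma div_decomp (c s t : ℕ) (ht : 0 < t) :
    (c * s) / t = (c * (s % t)) / t + c * (s / t) := by
  have hs : t * (s / t) + s % t = s := Nat.div_add_mod s t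
  have h : c * s = c * (s % t) + (c * (s / t)) * t := by nth_rewrite 1 [← hs]; ring
  rw [h, Nat.add_mul_div_right _ _ ht]

lemma perturb (C t r c : ℕ) (hC : 1 ≤ C) (ht : 1 ≤ t) (hc1 : 1 ≤ c) (hcC : c ≤ C) :
    (c * (2 * C * r + 1)) / (2 * C * t) = (c * r) / t ∧
      1 ≤ (c * (2 * C * r + 1)) % (2 * C * t) := by
  have hkey : c * (2 * C * r + 1) = (2 * C * t) * ((c * r) / t) + (2 * C * ((c * r) % t) + c) := by
    have h := Nat.div_add_mod (c * r) t
    calc c * (2 * C * r + 1) = 2 * C * (c * r) + c := by ring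
      _ = 2 * C * (t * ((c * r) / t) + (c * r) % t) + c := by rw [h]
      _ = (2 * C * t) * ((c * r) / t) + (2 * C * ((c * r) % t) + c) := by ring
  have hm : (c * r) % t < t := Nat.mod_lt _ (by omega)
  have hRlt : 2 * C * ((c * r) % t) + c < 2 * C * t := by nlinarith
  constructor
  · rw [hkey, Nat.mul_add_div (by positivity), Nat.div_eq_of_lt hRlt, add_zero]
  · rw [hkey, Nat.mul_add_mod, Nat.mod_eq_of_lt hRlt]; omega

lemma floor_eq (p s' t' C c : ℕ) (hc1 : 1 ≤ c) (hcC : c ≤ C) (ht' : 1 ≤ t')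
    (hp : C * t' < p) (hmod : 1 ≤ (c * s') % t') :
    (c * ((p * s') / t')) / p = (c * s') / t' := by
  set n := (p * s') / t' with hn
  set m := (c * s') / t' with hm
  set R := (c * s') % t' with hR
  have hCt : 1 ≤ C * t' := Nat.mul_pos (by omega) (by omega)
  have hp0 : 0 < p := by omega
  have hsplit : t' * m + R = c * s' := Nat.div_add_mod _ _
  have hRlt : R < t' := Nat.mod_lt _ (by omega)
  have hub : t' * n ≤ p * s' := by rw [mul_comm]; exact Nat.div_mul_le_self _ _
  have hlb : p * s' < t' * n + t' := by
    have : (p * s') / t' < n + 1 := Nat.lt_succ_self _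
    have := (Nat.div_lt_iff_lt_mul (by omega : 0 < t')).mp this
    nlinarith
  apply Nat.div_eq_of_lt_le
  · have h1 : c * (p * s') < c * (t' * n) + c * t' := by nlinarith
    have h2 : p * (t' * m) + p ≤ c * (p * s') := by nlinarith
    have h3 : c * t' < p := by nlinarith
    have : t' * (m * p) < t' * (c * n) := by nlinarith
    have := Nat.lt_of_mul_lt_mul_left this
    omega
  · have h1 : t' * (c * n) ≤ c * (p * s') := by nlinarith
    have h2 : c * (p * s') < t' * ((m + 1) * p) := by nlinarith
    have : t' * (c * n) < t' * ((m + 1) * p) := by omega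
    have := Nat.lt_of_mul_lt_mul_left this
    omega

theorem stmt_10 (K L : ℕ) (a : Fin K → ℕ) (b : Fin L → ℕ)
    (ha : ∀ k, 0 < a k) (hb : ∀ l, 0 < b l)
    (u : ℕ → ℚ)
    (hu : ∀ n, u n = (∏ k, (Nat.factorial (a k * n) : ℚ)) /
                     (∏ l, (Nat.factorial (b l * n) : ℚ)))
    (hnotint : ∃ n : ℕ, ¬ ∃ m : ℤ, u n = m) :
    ∃ P : ℤ, ∀ p : ℕ, p.Prime → P < (p : ℤ) →
      ∃ n : ℕ, padicValRat p (u n) < 0 := by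
  classical
  set A := ∑ k, a k with hA
  set Bs := ∑ l, b l with hBs
  have hak : ∀ k, a k ≤ A := fun k =>
    Finset.single_le_sum (f := fun k => a k) (fun _ _ => Nat.zero_le _) (Finset.mem_univ k)
  have hbl : ∀ l, b l ≤ Bs := fun l =>
    Finset.single_le_sum (f := fun l => b l) (fun _ _ => Nat.zero_le _) (Finset.mem_univ l)
  set C := A + Bs + 1 with hC
  -- a uniform way to compute valuations of u n
  have getB : ∀ (p n : ℕ), ∃ B, 2 ≤ B ∧ (∀ k, Nat.log p (a k * n) < B) ∧
      (∀ l, Nat.log p (b l * n) < B) := by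
    intro p n
    refine ⟨2 + (∑ k, Nat.log p (a k * n)) + ∑ l, Nat.log p (b l * n), by omega, ?_, ?_⟩
    · intro k
      have h : Nat.log p (a k * n) ≤ ∑ k, Nat.log p (a k * n) :=
        Finset.single_le_sum (f := fun k => Nat.log p (a k * n))
          (fun _ _ => Nat.zero_le _) (Finset.mem_univ k)
      omega
    · intro l
      have h : Nat.log p (b l * n) ≤ ∑ l, Nat.log p (b l * n) :=
        Finset.single_le_sum (f := fun l => Nat.log p (b l * n))
          (fun _ _ => Nat.zero_le _) (Finset.mem_univ l)
      omega
  have key : ∀ (p : ℕ), p.Prime → ∀ (n B : ℕ), (∀ k, Nat.log p (a k * n) < B) →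
      (∀ l, Nat.log p (b l * n) < B) →
      padicValRat p (u n) = ∑ i ∈ Finset.Ico 1 B,
        ((∑ k, ((a k * n / p ^ i : ℕ) : ℤ)) - ∑ l, ((b l * n / p ^ i : ℕ) : ℤ)) := by
    intro p hp n B hN hM
    rw [hu n]
    exact val_aux hp (fun k => a k * n) (fun l => b l * n) hN hM
  obtain ⟨n0, hn0⟩ := hnotint
  obtain ⟨q, hq, hval⟩ := neg_val_of_not_int hn0
  obtain ⟨B0, hB02, hB0k, hB0l⟩ := getB q n0
  rw [key q hq n0 B0 hB0k hB0l] at hval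
  have hex : ∃ i ∈ Finset.Ico 1 B0,
      ((∑ k, ((a k * n0 / q ^ i : ℕ) : ℤ)) - ∑ l, ((b l * n0 / q ^ i : ℕ) : ℤ)) < 0 := by
    by_contra hcon
    push_neg at hcon
    exact absurd hval (not_lt.mpr (Finset.sum_nonneg hcon))
  obtain ⟨i, _, hGi⟩ := hex
  set s := n0 with hs
  set t := q ^ i with ht
  have ht0 : 0 < t := pow_pos hq.pos i
  set r := s % t with hr
  by_cases hAB : Bs ≤ A
  · -- case ∑ a ≥ ∑ b : reduce to a fraction r/t ∈ (0,1)
    have hcastA : ((A : ℕ) : ℤ) = ∑ k, ((a k : ℕ) : ℤ) := by rw [hA]; push_cast; rfl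
    have hcastB : ((Bs : ℕ) : ℤ) = ∑ l, ((b l : ℕ) : ℤ) := by rw [hBs]; push_cast; rfl
    have hdeca : (∑ k, ((a k * s / t : ℕ) : ℤ)) =
        (∑ k, ((a k * r / t : ℕ) : ℤ)) + (A : ℤ) * ((s / t : ℕ) : ℤ) := by
      have e : ∀ k : Fin K, ((a k * s / t : ℕ) : ℤ) =
          ((a k * r / t : ℕ) : ℤ) + ((a k : ℕ) : ℤ) * ((s / t : ℕ) : ℤ) := by
        intro k
        rw [div_decomp (a k) s t ht0, Nat.cast_add, Nat.cast_mul]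
      rw [Finset.sum_congr rfl (fun k _ => e k), Finset.sum_add_distrib, hcastA,
        Finset.sum_mul]
    have hdecb : (∑ l, ((b l * s / t : ℕ) : ℤ)) =
        (∑ l, ((b l * r / t : ℕ) : ℤ)) + (Bs : ℤ) * ((s / t : ℕ) : ℤ) := by
      have e : ∀ l : Fin L, ((b l * s / t : ℕ) : ℤ) =
          ((b l * r / t : ℕ) : ℤ) + ((b l : ℕ) : ℤ) * ((s / t : ℕ) : ℤ) := by
        intro l
        rw [div_decomp (b l) s t ht0, Nat.cast_add, Nat.cast_mul]
      rw [Finset.sum_congr rfl (fun l _ => e l), Finset.sum_add_distrib, hcastB,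
        Finset.sum_mul]
    have hgr : (∑ k, ((a k * r / t : ℕ) : ℤ)) - (∑ l, ((b l * r / t : ℕ) : ℤ)) < 0 := by
      have hABz : ((Bs : ℕ) : ℤ) ≤ ((A : ℕ) : ℤ) := by exact_mod_cast hAB
      have hpos : (0:ℤ) ≤ ((A : ℤ) - (Bs : ℤ)) * ((s / t : ℕ) : ℤ) :=
        mul_nonneg (sub_nonneg.mpr hABz) (Int.natCast_nonneg _)
      rw [hdeca, hdecb] at hGi
      nlinarith
    have hr1 : 1 ≤ r := by
      by_contra h
      have hr0 : r = 0 := by omega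
      rw [hr0] at hgr
      simp at hgr
    have hrt : r < t := Nat.mod_lt _ ht0
    have hC1 : 1 ≤ C := by omega
    set s' := 2 * C * r + 1 with hs'
    set t' := 2 * C * t with ht'
    have ht'1 : 1 ≤ t' := by
      have := Nat.mul_pos (show 0 < 2 * C by omega) ht0
      omega
    refine ⟨(C * t' : ℕ), ?_⟩
    intro p hp hPp
    have hpCt : C * t' < p := by exact_mod_cast hPp
    set n := (p * s') / t' with hn
    have hs't' : s' < t' := by
      have h1 : 2 * C * (r + 1) ≤ 2 * C * t := Nat.mul_le_mul_left _ (by omega)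
      have h2 : 2 * C * (r + 1) = 2 * C * r + 2 * C := by ring
      omega
    have hCt'p : 1 ≤ C * t' := Nat.mul_pos (by omega) (by omega)
    have hp0 : 0 < p := by omega
    have hnp : n < p := by
      rw [hn, Nat.div_lt_iff_lt_mul (by omega : 0 < t')]
      calc p * s' < p * t' := (mul_lt_mul_iff_right₀ hp0).mpr hs't'
        _ = p * t' := rfl
    have hn1 : 1 ≤ n := by
      rw [hn, Nat.le_div_iff_mul_le (by omega : 0 < t')]
      have h1 : t' ≤ C * t' := Nat.le_mul_of_pos_left _ (by omega)
      have h2 : p ≤ p * s' := Nat.le_mul_of_pos_right _ (by omega)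
      omega
    -- key conversion for each coefficient
    have hconv : ∀ c, 1 ≤ c → c ≤ C → (c * n) / p = (c * r) / t := by
      intro c hc1 hcC
      obtain ⟨hpe, hpm⟩ := perturb C t r c hC1 (by omega) hc1 hcC
      rw [hn, floor_eq p s' t' C c hc1 hcC ht'1 hpCt hpm]
      exact hpe
    obtain ⟨B1, hB12, hB1k, hB1l⟩ := getB p n
    refine ⟨n, ?_⟩
    rw [key p hp n B1 hB1k hB1l]
    rw [Finset.sum_eq_single_of_mem 1 (Finset.mem_Ico.mpr ⟨le_refl 1, by omega⟩)]
    · rw [pow_one]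
      have e1 : (∑ k, ((a k * n / p : ℕ) : ℤ)) = ∑ k, ((a k * r / t : ℕ) : ℤ) :=
        Finset.sum_congr rfl fun k _ => by
          rw [hconv (a k) (ha k) (le_trans (hak k) (by omega))]
      have e2 : (∑ l, ((b l * n / p : ℕ) : ℤ)) = ∑ l, ((b l * r / t : ℕ) : ℤ) :=
        Finset.sum_congr rfl fun l _ => by
          rw [hconv (b l) (hb l) (le_trans (hbl l) (by omega))]
      rw [e1, e2]
      exact hgr
    · intro j hj hj1
      have hj2 : 2 ≤ j := by
        have := Finset.mem_Ico.mp hj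
        omega
      have hzero : ∀ c, c ≤ C → c * n / p ^ j = 0 := by
        intro c hcC
        apply Nat.div_eq_of_lt
        have hCp : C < p := by nlinarith
        have h1 : c * n < p * p := by nlinarith
        have h2 : p * p ≤ p ^ j := by
          calc p * p = p ^ 2 := by ring
            _ ≤ p ^ j := Nat.pow_le_pow_right hp0 hj2
        omega
      have z1 : (∑ k, ((a k * n / p ^ j : ℕ) : ℤ)) = 0 := by
        refine Finset.sum_eq_zero fun k _ => ?_
        rw [hzero (a k) (le_trans (hak k) (by omega))]
        rfl
      have z2 : (∑ l, ((b l * n / p ^ j : ℕ) : ℤ)) = 0 := by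
        refine Finset.sum_eq_zero fun l _ => ?_
        rw [hzero (b l) (le_trans (hbl l) (by omega))]
        rfl
      rw [z1, z2, sub_zero]
  · -- case ∑ a < ∑ b : take n = p
    push_neg at hAB
    refine ⟨(C : ℕ), ?_⟩
    intro p hp hPp
    have hCp : C < p := by exact_mod_cast hPp
    have hp0 : 0 < p := by omega
    refine ⟨p, ?_⟩
    obtain ⟨B1, hB12, hB1k, hB1l⟩ := getB p p
    rw [key p hp p B1 hB1k hB1l]
    rw [Finset.sum_eq_single_of_mem 1 (Finset.mem_Ico.mpr ⟨le_refl 1, by omega⟩)]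
    · rw [pow_one]
      have e1 : (∑ k, ((a k * p / p : ℕ) : ℤ)) = (A : ℤ) := by
        have e : ∀ k : Fin K, ((a k * p / p : ℕ) : ℤ) = ((a k : ℕ) : ℤ) := fun k => by
          rw [Nat.mul_div_cancel _ hp0]
        rw [Finset.sum_congr rfl fun k _ => e k, hA]
        push_cast
        rfl
      have e2 : (∑ l, ((b l * p / p : ℕ) : ℤ)) = (Bs : ℤ) := by
        have e : ∀ l : Fin L, ((b l * p / p : ℕ) : ℤ) = ((b l : ℕ) : ℤ) := fun l => by
          rw [Nat.mul_div_cancel _ hp0]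
        rw [Finset.sum_congr rfl fun l _ => e l, hBs]
        push_cast
        rfl
      rw [e1, e2]
      have : (A : ℤ) < (Bs : ℤ) := by exact_mod_cast hAB
      omega
    · intro j hj hj1
      have hj2 : 2 ≤ j := by
        have := Finset.mem_Ico.mp hj
        omega
      have hzero : ∀ c, c ≤ C → c * p / p ^ j = 0 := by
        intro c hcC
        apply Nat.div_eq_of_lt
        have h1 : c * p < p * p := by nlinarith
        have h2 : p * p ≤ p ^ j := by
          calc p * p = p ^ 2 := by ring
            _ ≤ p ^ j := Nat.pow_le_pow_right hp0 hj2
        omega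
      have z1 : (∑ k, ((a k * p / p ^ j : ℕ) : ℤ)) = 0 := by
        refine Finset.sum_eq_zero fun k _ => ?_
        rw [hzero (a k) (le_trans (hak k) (by omega))]
        rfl
      have z2 : (∑ l, ((b l * p / p ^ j : ℕ) : ℤ)) = 0 := by
        refine Finset.sum_eq_zero fun l _ => ?_
        rw [hzero (b l) (le_trans (hbl l) (by omega))]
        rfl
      rw [z1, z2, sub_zero]
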